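/- Let h > 0, α > 0, let m ≥ 1 be an integer, and let f : [0, m·h] → ℝ be continuous and affine on each subinterval [i·h, (i+1)·h] for i = 0,…,m−1 (i.e., f lies exactly in the span of the sample-and-hold and right-handed triangular functions on this grid). Then the hybrid-function approximation of J^α f given by the generalized one-shot operational matrices is exact at every grid node: for every integer j with 1 ≤ j ≤ m, (1/Γ(α)) ∫₀^{j·h} (j·h − τ)^{α−1} f(τ) dτ = (h^α/Γ(α+1)) · Σ_{i=0}^{j−1} f(i·h) · ς_{j−i} + (h^α/Γ(α+2)) · Σ_{i=0}^{j−1} (f((i+1)·h) − f(i·h)) · φ_{j−i}, where ς_k = k^α − (k−1)^α and φ_k = k^{α+1} − (k−1)^α(k+α). -/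

import Mathlib

open intervalIntegral MeasureTheory

private lemma aux_integrable (c a b r : ℝ) (hr : -1 < r) :
    IntervalIntegrable (fun τ => (c - τ) ^ r) volume a b := by
  simpa using
    (intervalIntegral.intervalIntegrable_rpow' (a := c - a) (b := c - b) hr).comp_sub_left c

private lemma aux_integral (a b c r : ℝ) (hr : -1 < r) :
    ∫ τ in a..b, (c - τ) ^ r = ((c - a) ^ (r + 1) - (c - b) ^ (r + 1)) / (r + 1) := by
  rw [intervalIntegral.integral_comp_sub_left (fun x => x ^ r) c,
    integral_rpow (Or.inl hr)]

private lemma aux_rpow_succ (x α : ℝ) (hx : 0 ≤ x) (hα : 0 < α) :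
    x ^ (α + 1) = x ^ α * x := by
  rcases eq_or_lt_of_le hx with h0 | h0
  · simp [← h0, Real.zero_rpow hα.ne', Real.zero_rpow (by positivity : α + 1 ≠ 0)]
  · rw [Real.rpow_add_one h0.ne']

private lemma aux_mul_rpow (x α : ℝ) (hx : 0 ≤ x) (hα : 0 < α) :
    x * x ^ (α - 1) = x ^ α := by
  rcases eq_or_lt_of_le hx with h0 | h0
  · simp [← h0, Real.zero_rpow hα.ne']
  · have := Real.rpow_add_one h0.ne' (α - 1)
    rw [sub_add_cancel] at this
    rw [this]; ring

private lemma piece (h α : ℝ) (hh : 0 < h) (hα : 0 < α) (A B : ℝ) (i j : ℕ) (hij : i < j) :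
    ∫ τ in ((i : ℝ) * h)..(((i : ℝ) + 1) * h),
        ((j : ℝ) * h - τ) ^ (α - 1) * (A + B * (τ - (i : ℝ) * h) / h)
      = A * (h ^ α / α) * (((j : ℝ) - (i : ℝ)) ^ α - ((j : ℝ) - (i : ℝ) - 1) ^ α)
        + B * (h ^ α / (α * (α + 1))) *
            (((j : ℝ) - (i : ℝ)) ^ (α + 1) -
              ((j : ℝ) - (i : ℝ) - 1) ^ α * (((j : ℝ) - (i : ℝ)) + α)) := by
  set c : ℝ := (j : ℝ) * h with hc
  have hij1 : (i : ℝ) + 1 ≤ (j : ℝ) := by exact_mod_cast Nat.succ_le_of_lt hij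
  have hle : (i : ℝ) * h ≤ ((i : ℝ) + 1) * h := by nlinarith
  have hle2 : ((i : ℝ) + 1) * h ≤ c := by rw [hc]; nlinarith
  have hcongr : ∀ τ ∈ Set.uIcc ((i : ℝ) * h) (((i : ℝ) + 1) * h),
      (c - τ) ^ (α - 1) * (A + B * (τ - (i : ℝ) * h) / h)
        = (A + B * (c - (i : ℝ) * h) / h) * (c - τ) ^ (α - 1)
          - (B / h) * (c - τ) ^ α := by
    intro τ hτ
    rw [Set.uIcc_of_le hle] at hτ
    have hτc : 0 ≤ c - τ := by linarith [hτ.2]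
    have key : (c - τ) * (c - τ) ^ (α - 1) = (c - τ) ^ α := aux_mul_rpow _ _ hτc hα
    field_simp
    linear_combination (-B) * key
  rw [intervalIntegral.integral_congr hcongr]
  have i1 : IntervalIntegrable (fun τ => (c - τ) ^ (α - 1)) volume
      ((i : ℝ) * h) (((i : ℝ) + 1) * h) := aux_integrable _ _ _ _ (by linarith)
  have i2 : IntervalIntegrable (fun τ => (c - τ) ^ α) volume
      ((i : ℝ) * h) (((i : ℝ) + 1) * h) := aux_integrable _ _ _ _ (by linarith)
  rw [intervalIntegral.integral_sub (i1.const_mul _) (i2.const_mul _),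
    intervalIntegral.integral_const_mul, intervalIntegral.integral_const_mul,
    aux_integral _ _ _ _ (show (-1:ℝ) < α - 1 by linarith),
    aux_integral _ _ _ _ (show (-1:ℝ) < α by linarith)]
  have e1 : c - (i : ℝ) * h = ((j : ℝ) - (i : ℝ)) * h := by rw [hc]; ring
  have e2 : c - ((i : ℝ) + 1) * h = ((j : ℝ) - (i : ℝ) - 1) * h := by rw [hc]; ring
  have hji : (0:ℝ) ≤ (j : ℝ) - (i : ℝ) := by linarith
  have hji1 : (0:ℝ) ≤ (j : ℝ) - (i : ℝ) - 1 := by linarith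
  rw [e1, e2, Real.mul_rpow hji hh.le, Real.mul_rpow hji1 hh.le,
    Real.mul_rpow hji hh.le, Real.mul_rpow hji1 hh.le]
  have hh1 : h ^ (α + 1) = h ^ α * h := Real.rpow_add_one hh.ne' α
  have hk1 : ((j : ℝ) - (i : ℝ) - 1) ^ (α + 1)
      = ((j : ℝ) - (i : ℝ) - 1) ^ α * ((j : ℝ) - (i : ℝ) - 1) :=
    aux_rpow_succ _ _ hji1 hα
  have hk2 : ((j : ℝ) - (i : ℝ)) ^ (α + 1)
      = ((j : ℝ) - (i : ℝ)) ^ α * ((j : ℝ) - (i : ℝ)) :=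
    aux_rpow_succ _ _ hji hα
  have hstep : α - 1 + 1 = α := by ring
  rw [hstep, hh1, hk1, hk2]
  have hα1 : α + 1 ≠ 0 := by positivity
  field_simp
  ring

/-- for a continuous function `f` that is affine on each
subinterval `[i·h, (i+1)·h]` of the grid (so that `f` lies exactly in the span
of the sample-and-hold and right-handed triangular functions), the
hybrid-function approximation of `J^α f` via the generalized one-shot
operational matrices is exact at every grid node `j·h`:
`J^α f(j·h) = (h^α/Γ(α+1))·Σ_{i<j} f(i·h)·ς_{j−i}
 + (h^α/Γ(α+2))·Σ_{i<j} (f((i+1)·h) − f(i·h))·φ_{j−i}`,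
where `ς_k = k^α − (k−1)^α` and `φ_k = k^{α+1} − (k−1)^α·(k+α)`. -/
theorem oneshot_matrices_exact_on_grid
    (h α : ℝ) (hh : 0 < h) (hα : 0 < α) (m : ℕ) (hm : 1 ≤ m)
    (f : ℝ → ℝ)
    (hfc : ContinuousOn f (Set.Icc (0 : ℝ) ((m : ℝ) * h)))
    (haff : ∀ i < m, ∀ t ∈ Set.Icc ((i : ℝ) * h) (((i : ℝ) + 1) * h),
      f t = f ((i : ℝ) * h) +
        (f (((i : ℝ) + 1) * h) - f ((i : ℝ) * h)) * (t - (i : ℝ) * h) / h) :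
    ∀ j : ℕ, 1 ≤ j → j ≤ m →
      (1 / Real.Gamma α) *
          (∫ τ in (0 : ℝ)..((j : ℝ) * h), ((j : ℝ) * h - τ) ^ (α - 1) * f τ) =
        (h ^ α / Real.Gamma (α + 1)) *
          (∑ i ∈ Finset.range j, f ((i : ℝ) * h) *
            (((j : ℝ) - (i : ℝ)) ^ α - ((j : ℝ) - (i : ℝ) - 1) ^ α)) +
        (h ^ α / Real.Gamma (α + 2)) *
          (∑ i ∈ Finset.range j, (f (((i : ℝ) + 1) * h) - f ((i : ℝ) * h)) *
            (((j : ℝ) - (i : ℝ)) ^ (α + 1) -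
              ((j : ℝ) - (i : ℝ) - 1) ^ α * (((j : ℝ) - (i : ℝ)) + α))) := by
  intro j hj1 hjm
  -- subinterval bounds
  have hsub : ∀ k : ℕ, k < j →
      Set.Icc ((k : ℝ) * h) (((k : ℝ) + 1) * h) ⊆ Set.Icc (0 : ℝ) ((m : ℝ) * h) := by
    intro k hk
    apply Set.Icc_subset_Icc
    · positivity
    · have : (k : ℝ) + 1 ≤ (m : ℝ) := by
        exact_mod_cast Nat.succ_le_of_lt (lt_of_lt_of_le hk hjm)
      nlinarith
  -- split the integral at grid nodes
  have hsplit : (∫ τ in (0 : ℝ)..((j : ℝ) * h), ((j : ℝ) * h - τ) ^ (α - 1) * f τ)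
      = ∑ k ∈ Finset.range j,
          ∫ τ in ((k : ℝ) * h)..(((k : ℝ) + 1) * h), ((j : ℝ) * h - τ) ^ (α - 1) * f τ := by
    have := intervalIntegral.sum_integral_adjacent_intervals
      (a := fun k : ℕ => (k : ℝ) * h) (n := j)
      (f := fun τ => ((j : ℝ) * h - τ) ^ (α - 1) * f τ)
      (μ := volume) ?hint
    · push_cast at this
      simpa using this.symm
    · intro k hk
      have hle : (k : ℝ) * h ≤ (((k + 1 : ℕ)) : ℝ) * h := by
        push_cast; nlinarith
      apply (aux_integrable ((j : ℝ) * h) _ _ _ (by linarith)).mul_continuousOn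
      apply hfc.mono
      rw [Set.uIcc_of_le hle]
      have := hsub k hk
      push_cast at this ⊢
      exact this
  -- evaluate each piece
  have key : ∀ k ∈ Finset.range j,
      (∫ τ in ((k : ℝ) * h)..(((k : ℝ) + 1) * h), ((j : ℝ) * h - τ) ^ (α - 1) * f τ)
        = f ((k : ℝ) * h) * (h ^ α / α) *
            (((j : ℝ) - (k : ℝ)) ^ α - ((j : ℝ) - (k : ℝ) - 1) ^ α)
          + (f (((k : ℝ) + 1) * h) - f ((k : ℝ) * h)) * (h ^ α / (α * (α + 1))) *
            (((j : ℝ) - (k : ℝ)) ^ (α + 1) -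
              ((j : ℝ) - (k : ℝ) - 1) ^ α * (((j : ℝ) - (k : ℝ)) + α)) := by
    intro k hk
    rw [Finset.mem_range] at hk
    have hle : (k : ℝ) * h ≤ ((k : ℝ) + 1) * h := by nlinarith
    have hcongr : ∀ τ ∈ Set.uIcc ((k : ℝ) * h) (((k : ℝ) + 1) * h),
        ((j : ℝ) * h - τ) ^ (α - 1) * f τ
          = ((j : ℝ) * h - τ) ^ (α - 1) *
              (f ((k : ℝ) * h) +
                (f (((k : ℝ) + 1) * h) - f ((k : ℝ) * h)) * (τ - (k : ℝ) * h) / h) := by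
      intro τ hτ
      rw [Set.uIcc_of_le hle] at hτ
      rw [haff k (lt_of_lt_of_le hk hjm) τ hτ]
    rw [intervalIntegral.integral_congr hcongr]
    exact piece h α hh hα _ _ k j hk
  rw [hsplit, Finset.sum_congr rfl key]
  -- Gamma recursions
  have hΓ : 0 < Real.Gamma α := Real.Gamma_pos_of_pos hα
  have hΓ1 : Real.Gamma (α + 1) = α * Real.Gamma α := Real.Gamma_add_one hα.ne'
  have hΓ2 : Real.Gamma (α + 2) = (α + 1) * (α * Real.Gamma α) := by
    have : α + 2 = (α + 1) + 1 := by ring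
    rw [this, Real.Gamma_add_one (by positivity), hΓ1]
  rw [Finset.sum_add_distrib, mul_add, hΓ1, hΓ2, Finset.mul_sum, Finset.mul_sum,
    Finset.mul_sum, Finset.mul_sum]
  congr 1 <;> apply Finset.sum_congr rfl <;> intro k _ <;>
    field_simp <;> ring
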